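/- Let F be an m×n Ferrers diagram and C_F an [F, k, δ]_q Ferrers diagram rank-metric code. Then k ≤ min over i ∈ {0,...,δ−1} of v_i, where v_i is the number of dots in F that are not contained in the first i rows and not in the rightmost δ−1−i columns. -/

import Mathlib

/-- An `m×n` Ferrers diagram: a set of dots in `[m]×[n]`, shifted to the right,
with non-increasing row lengths downwards, full first row and full rightmost column. -/
def IsFerrersDiagram (m n : ℕ) (F : Finset (ℕ × ℕ)) : Prop :=
  (∀ p ∈ F, p.1 < m ∧ p.2 < n) ∧
  (∀ p ∈ F, 1 ≤ p.1 → (p.1 - 1, p.2) ∈ F) ∧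
  (∀ p ∈ F, p.2 + 1 < n → (p.1, p.2 + 1) ∈ F) ∧
  (∀ j < n, (0, j) ∈ F) ∧
  (∀ i < m, (i, n - 1) ∈ F)

attribute [local instance] Classical.propDecidable

open Module Matrix

/-- rank of a matrix whose nonzero columns lie in `s` is at most `s.card`. -/
lemma rank_le_card_cols {K : Type*} [Field K] {a b : ℕ}
    (A : Matrix (Fin a) (Fin b) K) (s : Finset (Fin b))
    (h : ∀ j ∉ s, ∀ i, A i j = 0) : A.rank ≤ s.card := by
  rw [Matrix.rank_eq_finrank_span_cols]
  have hsub : Set.range Aᵀ ⊆ insert 0 (↑(s.image Aᵀ) : Set (Fin a → K)) := by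
    rintro _ ⟨j, rfl⟩
    by_cases hj : j ∈ s
    · exact Set.mem_insert_iff.mpr (Or.inr (Finset.mem_coe.mpr (Finset.mem_image_of_mem _ hj)))
    · left; funext i; exact h j hj i
  calc finrank K (Submodule.span K (Set.range Aᵀ))
      ≤ finrank K (Submodule.span K (insert 0 (↑(s.image Aᵀ) : Set (Fin a → K)))) :=
        Submodule.finrank_mono (Submodule.span_mono hsub)
    _ = finrank K (Submodule.span K (↑(s.image Aᵀ) : Set (Fin a → K))) := by
        rw [Submodule.span_insert_zero]
    _ ≤ (s.image Aᵀ).card := finrank_span_finset_le_card _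
    _ ≤ s.card := Finset.card_image_le

lemma rank_le_card_rows {K : Type*} [Field K] {a b : ℕ}
    (A : Matrix (Fin a) (Fin b) K) (s : Finset (Fin a))
    (h : ∀ i ∉ s, ∀ j, A i j = 0) : A.rank ≤ s.card := by
  rw [← Matrix.rank_transpose]
  exact rank_le_card_cols Aᵀ s (fun i hi j => h i hi j)

lemma matrix_rank_add_le {K : Type*} [Field K] {a b : ℕ}
    (A B : Matrix (Fin a) (Fin b) K) : (A + B).rank ≤ A.rank + B.rank := by
  rw [Matrix.rank, Matrix.rank, Matrix.rank, Matrix.mulVecLin_add]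
  calc finrank K (LinearMap.range (A.mulVecLin + B.mulVecLin))
      ≤ finrank K ↑(LinearMap.range A.mulVecLin ⊔ LinearMap.range B.mulVecLin) := by
        apply Submodule.finrank_mono
        rintro _ ⟨x, rfl⟩
        exact Submodule.mem_sup.mpr ⟨A.mulVecLin x, ⟨x, rfl⟩, B.mulVecLin x, ⟨x, rfl⟩, rfl⟩
    _ ≤ _ := Submodule.finrank_add_le_finrank_add_finrank _ _

/-- Singleton-like bound for Ferrers diagram rank-metric codes (Etzion–Silberstein):
if `C` is an `[F, k, δ]_q` code then `k ≤ v_i` for every `i ∈ [δ]`, where `v_i` is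
the number of dots of `F` not in the first `i` rows nor in the rightmost `δ-1-i` columns. -/
theorem stmt3 (Fq : Type*) [Field Fq] [Fintype Fq]
    (m n k δ : ℕ) (hδ : 1 ≤ δ) (F : Finset (ℕ × ℕ))
    (hF : IsFerrersDiagram m n F)
    (C : Submodule Fq (Matrix (Fin m) (Fin n) Fq))
    (hsupp : ∀ M ∈ C, ∀ (i : Fin m) (j : Fin n), ((i : ℕ), (j : ℕ)) ∉ F → M i j = 0)
    (hdim : Module.finrank Fq C = k)
    (hrank : ∀ M ∈ C, M ≠ 0 → δ ≤ M.rank) :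
    ∀ i < δ, k ≤ (F.filter (fun p => i ≤ p.1 ∧ p.2 + (δ - 1 - i) < n)).card := by
  intro i hi
  set t := δ - 1 - i with ht
  set S := F.filter (fun p => i ≤ p.1 ∧ p.2 + t < n) with hS
  have hmemm : ∀ p : ↥S, (p : ℕ × ℕ).1 < m ∧ (p : ℕ × ℕ).2 < n := fun p =>
    hF.1 p (Finset.mem_of_mem_filter _ p.2)
  let L : ↥C →ₗ[Fq] (↥S → Fq) :=
    { toFun := fun M p => (M : Matrix (Fin m) (Fin n) Fq)
        ⟨(p : ℕ × ℕ).1, (hmemm p).1⟩ ⟨(p : ℕ × ℕ).2, (hmemm p).2⟩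
      map_add' := fun M N => by funext p; rfl
      map_smul' := fun c M => by funext p; rfl }
  have hinj : Function.Injective L := by
    rw [← LinearMap.ker_eq_bot, eq_bot_iff]
    intro M hM
    have hM0 : ∀ p : ↥S, (M : Matrix (Fin m) (Fin n) Fq)
        ⟨(p : ℕ × ℕ).1, (hmemm p).1⟩ ⟨(p : ℕ × ℕ).2, (hmemm p).2⟩ = 0 := by
      intro p
      have := LinearMap.mem_ker.mp hM
      exact congrFun this p
    -- the underlying matrix
    set A : Matrix (Fin m) (Fin n) Fq := (M : Matrix (Fin m) (Fin n) Fq) with hA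
    have hAS : ∀ (a : Fin m) (b : Fin n), ((a : ℕ), (b : ℕ)) ∈ S → A a b = 0 := by
      intro a b hab
      have := hM0 ⟨((a : ℕ), (b : ℕ)), hab⟩
      simpa using this
    let A₁ : Matrix (Fin m) (Fin n) Fq := Matrix.of fun a b => if (a : ℕ) < i then A a b else 0
    let A₂ : Matrix (Fin m) (Fin n) Fq := A - A₁
    have hsplit : A = A₁ + A₂ := by simp [A₂]
    have hr1 : A₁.rank ≤ i := by
      have := rank_le_card_rows A₁ (Finset.univ.filter (fun a : Fin m => (a : ℕ) < i))
        (by intro a ha j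
            simp only [Finset.mem_filter, Finset.mem_univ, true_and, not_lt] at ha
            simp [A₁, Matrix.of_apply, Nat.not_lt.mpr ha])
      refine this.trans ?_
      have h2 := Finset.card_le_card_of_injOn
        (s := Finset.univ.filter (fun a : Fin m => (a : ℕ) < i)) (t := Finset.range i)
        (fun a : Fin m => (a : ℕ))
        (fun a ha => by
          simp only [Finset.mem_coe, Finset.mem_filter, Finset.mem_univ, true_and] at ha
          exact Finset.mem_range.mpr ha)
        (fun x _ y _ h => Fin.val_injective h)
      simpa using h2
    have hr2 : A₂.rank ≤ t := by
      have := rank_le_card_cols A₂ (Finset.univ.filter (fun b : Fin n => n ≤ (b : ℕ) + t))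
        (by intro b hb a
            simp only [Finset.mem_filter, Finset.mem_univ, true_and, not_le] at hb
            by_cases hai : (a : ℕ) < i
            · simp [A₂, A₁, hai]
            · have hA0 : A a b = 0 := by
                by_cases hF' : ((a : ℕ), (b : ℕ)) ∈ F
                · exact hAS a b (Finset.mem_filter.mpr ⟨hF', Nat.not_lt.mp hai, hb⟩)
                · exact hsupp A M.2 a b hF'
              simp [A₂, A₁, hai, hA0])
      refine this.trans ?_
      have h2 := Finset.card_le_card_of_injOn
        (s := Finset.univ.filter (fun b : Fin n => n ≤ (b : ℕ) + t)) (t := Finset.range t)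
        (fun b : Fin n => (b : ℕ) - (n - t))
        (fun b hb => by
          simp only [Finset.mem_coe, Finset.mem_filter, Finset.mem_univ, true_and] at hb
          have hbn := b.isLt
          simp only [Finset.mem_coe, Finset.mem_range]
          omega)
        (fun x hx y hy h => by
          simp only [Finset.coe_filter, Finset.mem_univ, true_and, Set.mem_setOf_eq] at hx hy
          have hxn := x.isLt; have hyn := y.isLt
          simp only at h
          exact Fin.val_injective (by omega))
      simpa using h2
    have hrA : A.rank ≤ δ - 1 := by
      calc A.rank = (A₁ + A₂).rank := by rw [← hsplit]
        _ ≤ A₁.rank + A₂.rank := matrix_rank_add_le _ _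
        _ ≤ i + t := Nat.add_le_add hr1 hr2
        _ ≤ δ - 1 := by omega
    have hA0 : A = 0 := by
      by_contra hne
      have := hrank A M.2 hne
      omega
    exact (Submodule.mem_bot _).mpr (Subtype.ext hA0)
  calc k = finrank Fq C := hdim.symm
    _ ≤ finrank Fq (↥S → Fq) := LinearMap.finrank_le_finrank_of_injective hinj
    _ = Fintype.card ↥S := Module.finrank_pi Fq
    _ = S.card := Fintype.card_coe S
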